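/- Let $A$ and $B$ be $\Omega$-algebras over a field $F$, let $Q$ be a unital associative algebra, and let $\rho \colon A \to B \otimes Q$ be a comeasuring. If $Q$ is finite dimensional, then the map $\rho^\vee \colon Q^* \otimes A \to B$, $\rho^\vee(q^*\otimes a) = q^*(a_{(1)})a_{(0)}$, is a measuring from $A$ to $B$ with respect to the coalgebra structure on $Q^*$ dual to the algebra structure on $Q$. -/

import Mathlib

open TensorProduct

universe u

variable (F : Type u) [Field F]

/-- Iterated tensor powers `A^{⊗ n}` (with `A^{⊗ 0} = F`), bundled as objects of
`ModuleCat F` to carry the module structure through the recursion. -/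
noncomputable def TPow (A : Type u) [AddCommGroup A] [Module F A] : ℕ → ModuleCat.{u} F
  | 0 => ModuleCat.of F F
  | n + 1 => ModuleCat.of F (A ⊗[F] TPow A n)

variable {A B Q : Type u} [AddCommGroup A] [Module F A] [AddCommGroup B] [Module F B]
  [Ring Q] [Algebra F Q]

/-- The maps `ρ_n : A^{⊗ n} → B^{⊗ n} ⊗ Q` induced by `ρ : A → B ⊗ Q`:
`ρ_0(α) = α 1_Q` and `ρ_n(a_1 ⊗ ⋯ ⊗ a_n) = (a_1)_{(0)} ⊗ ⋯ ⊗ (a_n)_{(0)} ⊗ (a_1)_{(1)} ⋯ (a_n)_{(1)}`. -/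
noncomputable def rhoPow (ρ : A →ₗ[F] B ⊗[F] Q) :
    ∀ n, (TPow F A n : Type u) →ₗ[F] (TPow F B n : Type u) ⊗[F] Q
  | 0 => LinearMap.toSpanSingleton F ((TPow F B 0 : Type u) ⊗[F] Q) ((1 : F) ⊗ₜ[F] (1 : Q))
  | n + 1 =>
    (LinearMap.lTensor (B ⊗[F] (TPow F B n : Type u)) (LinearMap.mul' F Q) :
      (B ⊗[F] (TPow F B n : Type u)) ⊗[F] (Q ⊗[F] Q) →ₗ[F] (B ⊗[F] (TPow F B n : Type u)) ⊗[F] Q) ∘ₗ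
      (TensorProduct.tensorTensorTensorComm F B Q (TPow F B n) Q).toLinearMap ∘ₗ
      TensorProduct.map ρ (rhoPow ρ n)

variable {P : Type u} [AddCommGroup P] [Module F P]

/-- The maps `ψ_n : P ⊗ A^{⊗ n} → B^{⊗ n}` induced by `ψ : P ⊗ A → B` relative to
comultiplication and counit maps on `P`:
`ψ_0(p) = ε(p)` and `ψ_n(p ⊗ a_1 ⊗ ⋯ ⊗ a_n) = ψ(p_{(1)} ⊗ a_1) ⊗ ⋯ ⊗ ψ(p_{(n)} ⊗ a_n)`. -/
noncomputable def psiPow (comul : P →ₗ[F] P ⊗[F] P) (counit : P →ₗ[F] F)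
    (ψ : P ⊗[F] A →ₗ[F] B) :
    ∀ n, P ⊗[F] (TPow F A n : Type u) →ₗ[F] (TPow F B n : Type u)
  | 0 => counit ∘ₗ (TensorProduct.rid F P).toLinearMap
  | n + 1 =>
    TensorProduct.map ψ (psiPow comul counit ψ n) ∘ₗ
      (TensorProduct.tensorTensorTensorComm F P P A (TPow F A n)).toLinearMap ∘ₗ
      LinearMap.rTensor (A ⊗[F] (TPow F A n : Type u)) comul

/-- The comultiplication on `Q^*` dual to the multiplication of a finite dimensional
algebra `Q`. -/
noncomputable def dualComul [FiniteDimensional F Q] :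
    Module.Dual F Q →ₗ[F] Module.Dual F Q ⊗[F] Module.Dual F Q :=
  (TensorProduct.dualDistribEquiv F Q Q).symm.toLinearMap ∘ₗ (LinearMap.mul' F Q).dualMap

/-- The counit on `Q^*` dual to the unit of `Q`, i.e. evaluation at `1`. -/
noncomputable def dualCounit : Module.Dual F Q →ₗ[F] F :=
  (LinearMap.applyₗ : Q →ₗ[F] (Q →ₗ[F] F) →ₗ[F] F) 1

/-- The map `ρ^∨ : Q^* ⊗ A → B`, `ρ^∨(q^* ⊗ a) = q^*(a_{(1)}) a_{(0)}`. -/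
noncomputable def dvee (ρ : A →ₗ[F] B ⊗[F] Q) : Module.Dual F Q ⊗[F] A →ₗ[F] B :=
  (TensorProduct.rid F B).toLinearMap ∘ₗ
    LinearMap.lTensor B (TensorProduct.lift (LinearMap.id : Module.Dual F Q →ₗ[F] Q →ₗ[F] F)) ∘ₗ
    (TensorProduct.leftComm F (Module.Dual F Q) B Q).toLinearMap ∘ₗ
    LinearMap.lTensor (Module.Dual F Q) ρ


section Aux

set_option synthInstance.maxHeartbeats 1000000
set_option maxHeartbeats 1000000

variable {M N C : Type u} [AddCommGroup M] [Module F M] [AddCommGroup N] [Module F N]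
  [AddCommGroup C] [Module F C]

/-- Contraction `f ⊗ (m ⊗ q) ↦ f q • m`, bundled linearly in `f`. -/
noncomputable def contrL : Module.Dual F Q →ₗ[F] M ⊗[F] Q →ₗ[F] M :=
  LinearMap.llcomp F (M ⊗[F] Q) (M ⊗[F] F) M (TensorProduct.rid F M).toLinearMap ∘ₗ
    LinearMap.lTensorHom M

@[simp] lemma contrL_tmul (f : Module.Dual F Q) (m : M) (q : Q) :
    contrL F f (m ⊗ₜ[F] q) = f q • m := by
  simp [contrL]

@[simp] lemma contrL_rTensor (f : Module.Dual F Q) (g : M →ₗ[F] N) (u : M ⊗[F] Q) :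
    contrL F f (LinearMap.rTensor Q g u) = g (contrL F f u) := by
  induction u using TensorProduct.induction_on with
  | zero => simp
  | tmul m q => simp
  | add x y hx hy => simp [hx, hy]

/-- `f ⊗ m ↦ contraction of f with ρ' m`. -/
noncomputable def Dvee (ρ' : M →ₗ[F] N ⊗[F] Q) : Module.Dual F Q ⊗[F] M →ₗ[F] N :=
  TensorProduct.lift (((contrL F).flip ∘ₗ ρ').flip)

@[simp] lemma Dvee_tmul (ρ' : M →ₗ[F] N ⊗[F] Q) (f : Module.Dual F Q) (m : M) :
    Dvee F ρ' (f ⊗ₜ[F] m) = contrL F f (ρ' m) := by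
  simp [Dvee]

lemma dvee_eq (ρ : A →ₗ[F] B ⊗[F] Q) : dvee F ρ = Dvee F ρ := by
  apply TensorProduct.ext'
  intro f a
  simp only [dvee, LinearMap.coe_comp, Function.comp_apply, LinearEquiv.coe_coe,
    LinearMap.lTensor_tmul, Dvee_tmul]
  induction ρ a using TensorProduct.induction_on with
  | zero => simp only [TensorProduct.tmul_zero, map_zero]
  | tmul b q => simp [TensorProduct.leftComm_tmul]
  | add x y hx hy => simp only [TensorProduct.tmul_add, map_add, hx, hy]

lemma Dvee_comp_lTensor (ρ' : M →ₗ[F] N ⊗[F] Q) (g : C →ₗ[F] M) :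
    Dvee F ρ' ∘ₗ LinearMap.lTensor (Module.Dual F Q) g = Dvee F (ρ' ∘ₗ g) := by
  apply TensorProduct.ext'
  intro f c
  simp

lemma Dvee_rTensor (ρ' : M →ₗ[F] N ⊗[F] Q) (g : N →ₗ[F] C) :
    Dvee F (LinearMap.rTensor Q g ∘ₗ ρ') = g ∘ₗ Dvee F ρ' := by
  apply TensorProduct.ext'
  intro f m
  simp

lemma dualDistrib_dualComul [FiniteDimensional F Q] (f : Module.Dual F Q) :
    TensorProduct.dualDistrib F Q Q (dualComul F f) = f ∘ₗ LinearMap.mul' F Q := by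
  have h : TensorProduct.dualDistrib F Q Q (dualComul F f)
      = (TensorProduct.dualDistribEquiv F Q Q)
          ((TensorProduct.dualDistribEquiv F Q Q).symm ((LinearMap.mul' F Q).dualMap f)) := rfl
  rw [h, LinearEquiv.apply_symm_apply]
  rfl

/-- `pairTwo (f₁ ⊗ f₂) ((m ⊗ q) ⊗ (n ⊗ r)) = f₁ q • m ⊗ f₂ r • n`. -/
noncomputable def pairTwo :
    Module.Dual F Q ⊗[F] Module.Dual F Q →ₗ[F] (M ⊗[F] Q) ⊗[F] (N ⊗[F] Q) →ₗ[F] M ⊗[F] N :=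
  TensorProduct.lift ((TensorProduct.mapBilinear (σ₁₂ := RingHom.id F) (M := M ⊗[F] Q) (N := N ⊗[F] Q)
    (M₂ := M) (N₂ := N)).compl₁₂
    (contrL F) (contrL F))

@[simp] lemma pairTwo_tmul (f₁ f₂ : Module.Dual F Q) (w : (M ⊗[F] Q) ⊗[F] (N ⊗[F] Q)) :
    pairTwo F (f₁ ⊗ₜ[F] f₂) w = TensorProduct.map (contrL F f₁) (contrL F f₂) w := by
  simp [pairTwo]

lemma pairTwo_eval (g : Module.Dual F Q ⊗[F] Module.Dual F Q) (m : M) (q : Q) (n : N) (r : Q) :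
    pairTwo F g ((m ⊗ₜ[F] q) ⊗ₜ[F] (n ⊗ₜ[F] r))
      = TensorProduct.dualDistrib F Q Q g (q ⊗ₜ[F] r) • (m ⊗ₜ[F] n) := by
  induction g using TensorProduct.induction_on with
  | zero => simp
  | tmul f₁ f₂ =>
      simp [TensorProduct.smul_tmul', TensorProduct.tmul_smul, smul_smul, mul_comm]
  | add x y hx hy => simp [hx, hy, add_smul]

lemma pairTwo_dualComul [FiniteDimensional F Q] (f : Module.Dual F Q) :
    pairTwo F (dualComul F f)
      = contrL F f ∘ₗ LinearMap.lTensor (M ⊗[F] N) (LinearMap.mul' F Q) ∘ₗ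
        (TensorProduct.tensorTensorTensorComm F M Q N Q).toLinearMap := by
  apply TensorProduct.ext'
  intro u v
  induction u using TensorProduct.induction_on with
  | zero => simp
  | add x y hx hy => simp_all [TensorProduct.add_tmul]
  | tmul m q =>
    induction v using TensorProduct.induction_on with
    | zero => simp
    | add x y hx hy => simp_all [TensorProduct.tmul_add]
    | tmul n r =>
      rw [pairTwo_eval, dualDistrib_dualComul]
      simp [TensorProduct.tensorTensorTensorComm_tmul]

lemma psiPow_eq_Dvee [FiniteDimensional F Q] (ρ : A →ₗ[F] B ⊗[F] Q) :
    ∀ n, psiPow F (dualComul F) (dualCounit F) (dvee F ρ) n = Dvee F (rhoPow F ρ n)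
  | 0 => by
    have base : (dualCounit F ∘ₗ (TensorProduct.rid F (Module.Dual F Q)).toLinearMap)
        = Dvee F (LinearMap.toSpanSingleton F (F ⊗[F] Q) ((1:F) ⊗ₜ[F] (1:Q))) := by
      apply TensorProduct.ext'
      intro f α
      simp [dualCounit, LinearMap.toSpanSingleton_apply, TensorProduct.rid_tmul,
        smul_eq_mul, mul_comm]
    exact base
  | n + 1 => by
    rw [show psiPow F (dualComul F) (dualCounit F) (dvee F ρ) (n + 1) =
        TensorProduct.map (dvee F ρ) (psiPow F (dualComul F) (dualCounit F) (dvee F ρ) n) ∘ₗ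
          (TensorProduct.tensorTensorTensorComm F (Module.Dual F Q) (Module.Dual F Q) A
            (TPow F A n)).toLinearMap ∘ₗ
          LinearMap.rTensor (A ⊗[F] (TPow F A n : Type u)) (dualComul F) from rfl,
      psiPow_eq_Dvee ρ n, dvee_eq]
    apply TensorProduct.ext'
    intro f y
    induction y using TensorProduct.induction_on with
    | zero => simp; exact (map_zero _).symm
    | add x y hx hy => simp_all [TensorProduct.tmul_add]; exact (map_add _ _ _).symm
    | tmul a x =>
      have hlhs : (TensorProduct.map (Dvee F ρ) (Dvee F (rhoPow F ρ n)) ∘ₗ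
          (TensorProduct.tensorTensorTensorComm F (Module.Dual F Q) (Module.Dual F Q) A
            (TPow F A n)).toLinearMap ∘ₗ
          LinearMap.rTensor (A ⊗[F] (TPow F A n : Type u)) (dualComul F))
            (f ⊗ₜ[F] (a ⊗ₜ[F] x))
          = pairTwo F (dualComul F f) (ρ a ⊗ₜ[F] rhoPow F ρ n x) := by
        simp only [LinearMap.coe_comp, Function.comp_apply, LinearMap.rTensor_tmul,
          LinearEquiv.coe_coe]
        generalize dualComul F f = g
        induction g using TensorProduct.induction_on with
        | zero => simp
        | tmul f₁ f₂ =>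
            simp [TensorProduct.tensorTensorTensorComm_tmul]
        | add x' y' hx hy =>
            simp_all [TensorProduct.add_tmul]
      have hrhs : Dvee F (rhoPow F ρ (n + 1)) (f ⊗ₜ[F] (a ⊗ₜ[F] x))
          = contrL F f ((LinearMap.lTensor (B ⊗[F] (TPow F B n : Type u)) (LinearMap.mul' F Q))
              ((TensorProduct.tensorTensorTensorComm F B Q (TPow F B n) Q)
                (ρ a ⊗ₜ[F] rhoPow F ρ n x))) := by
        exact (Dvee_tmul F (rhoPow F ρ (n + 1)) f (a ⊗ₜ[F] x)).trans rfl
      rw [hlhs, pairTwo_dualComul]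
      simp only [LinearMap.coe_comp, Function.comp_apply, LinearEquiv.coe_coe]
      exact hrhs.symm

end Aux

/-- Let `A`, `B` be `Ω`-algebras, `Q` a finite dimensional unital associative algebra and
`ρ : A → B ⊗ Q` a comeasuring.  Then `ρ^∨ : Q^* ⊗ A → B` is a measuring with respect to the
coalgebra structure on `Q^*` dual to the algebra structure of `Q`. -/
theorem dvee_measuring_of_comeasuring [FiniteDimensional F Q]
    {Ω : Type*} (s t : Ω → ℕ)
    (opsA : ∀ ω : Ω, (TPow F A (s ω) : Type u) →ₗ[F] (TPow F A (t ω) : Type u))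
    (opsB : ∀ ω : Ω, (TPow F B (s ω) : Type u) →ₗ[F] (TPow F B (t ω) : Type u))
    (ρ : A →ₗ[F] B ⊗[F] Q)
    (hρ : ∀ ω : Ω,
      rhoPow F ρ (t ω) ∘ₗ opsA ω = LinearMap.rTensor Q (opsB ω) ∘ₗ rhoPow F ρ (s ω)) :
    ∀ ω : Ω,
      psiPow F (dualComul F) (dualCounit F) (dvee F ρ) (t ω) ∘ₗ
          LinearMap.lTensor (Module.Dual F Q) (opsA ω) =
        opsB ω ∘ₗ psiPow F (dualComul F) (dualCounit F) (dvee F ρ) (s ω) := by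
  intro ω
  rw [psiPow_eq_Dvee, psiPow_eq_Dvee, Dvee_comp_lTensor, hρ ω, Dvee_rTensor]
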